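/- Let X be a regular space and f : X → Y a closed continuous map. Suppose b ∈ X is a Gδ-point in the fiber F = f⁻¹(f(b)) and F is Fréchet-Urysohn at b. If Y is strongly Fréchet-Urysohn, then X is Fréchet-Urysohn at b. -/

import Mathlib

/-- `X` is Fréchet–Urysohn at `x`. -/
def FrechetUrysohnAt (X : Type*) [TopologicalSpace X] (x : X) : Prop :=
  ∀ A : Set X, x ∈ closure A →
    ∃ u : ℕ → X, (∀ n, u n ∈ A) ∧ Filter.Tendsto u Filter.atTop (nhds x)

/-- `X` is strongly Fréchet–Urysohn. -/
def StronglyFrechetUrysohn (X : Type*) [TopologicalSpace X] : Prop :=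
  ∀ (A : ℕ → Set X) (x : X), (∀ n, A (n+1) ⊆ A n) → (∀ n, x ∈ closure (A n)) →
    ∃ u : ℕ → X, (∀ n, u n ∈ A n) ∧ Filter.Tendsto u Filter.atTop (nhds x)

/-- `X` is strictly Fréchet–Urysohn. -/
def StrictlyFrechetUrysohn (X : Type*) [TopologicalSpace X] : Prop :=
  ∀ (A : ℕ → Set X) (x : X), (∀ n, x ∈ closure (A n)) →
    ∃ u : ℕ → X, (∀ n, u n ∈ A n) ∧ Filter.Tendsto u Filter.atTop (nhds x)

/-- If `f : X → Y` is a closed continuous map from a regular space, `b` is a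
Gδ-point of its fiber, the fiber is Fréchet–Urysohn at `b`, and `Y` is strongly
Fréchet–Urysohn, then `X` is Fréchet–Urysohn at `b`. -/
theorem frechetUrysohnAt_of_closed_map {X Y : Type*} [TopologicalSpace X]
    [TopologicalSpace Y] [RegularSpace X] (f : X → Y) (hc : Continuous f)
    (hcl : IsClosedMap f) (b : X)
    (hGδ : IsGδ ({(⟨b, rfl⟩ : f ⁻¹' {f b})} : Set (f ⁻¹' {f b})))
    (hFU : FrechetUrysohnAt (f ⁻¹' {f b}) ⟨b, rfl⟩)
    (hY : StronglyFrechetUrysohn Y) :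
    FrechetUrysohnAt X b := by
  intro A hA
  -- extract a sequence of open sets in X from the Gδ hypothesis
  obtain ⟨G, hGopen, hGeq⟩ := hGδ.eq_iInter_nat
  choose O hOopen hOeq using fun n => isOpen_induced_iff.mp (hGopen n)
  have hbO : ∀ n, b ∈ O n := by
    intro n
    have : (⟨b, rfl⟩ : f ⁻¹' {f b}) ∈ G n := by
      have : (⟨b, rfl⟩ : f ⁻¹' {f b}) ∈ ⋂ n, G n := by rw [← hGeq]; exact rfl
      exact Set.mem_iInter.mp this n
    rw [← hOeq n] at this
    exact this
  have key : ∀ c : X, f c = f b → (∀ n, c ∈ O n) → c = b := by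
    intro c hfc hcO
    have hcF : c ∈ f ⁻¹' {f b} := hfc
    have : (⟨c, hcF⟩ : f ⁻¹' {f b}) ∈ ⋂ n, G n := by
      refine Set.mem_iInter.mpr fun n => ?_
      rw [← hOeq n]; exact hcO n
    rw [← hGeq] at this
    exact congrArg Subtype.val this
  -- regularity helper
  have reg : ∀ U : Set X, IsOpen U → b ∈ U →
      ∃ V, IsOpen V ∧ b ∈ V ∧ closure V ⊆ U := by
    intro U hU hbU
    rcases (closed_nhds_basis b).mem_iff.mp (hU.mem_nhds hbU) with ⟨s, ⟨hs_nhds, hs_closed⟩, hsU⟩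
    exact ⟨interior s, isOpen_interior, mem_interior_iff_mem_nhds.mpr hs_nhds,
      (closure_minimal interior_subset hs_closed).trans hsU⟩
  choose V hVopen hbV hVcl using fun n => reg (O n) (hOopen n) (hbO n)
  set V' : ℕ → Set X := fun n => ⋂ k ∈ Finset.range (n+1), V k with hV'def
  have hV'open : ∀ n, IsOpen (V' n) := fun n =>
    isOpen_biInter_finset fun k _ => hVopen k
  have hbV' : ∀ n, b ∈ V' n := fun n =>
    Set.mem_iInter₂.mpr fun k _ => hbV k
  have hV'anti : ∀ m n, m ≤ n → V' n ⊆ V' m := by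
    intro m n hmn x hx
    refine Set.mem_iInter₂.mpr fun k hk => Set.mem_iInter₂.mp hx k ?_
    exact Finset.mem_range.mpr (lt_of_lt_of_le (Finset.mem_range.mp hk) (by omega))
  have hV'O : ∀ n, closure (V' n) ⊆ O n := fun n =>
    (closure_mono (Set.biInter_subset_of_mem (Finset.self_mem_range_succ n))).trans (hVcl n)
  -- helper: closure meets open neighborhoods
  have clo_inter : ∀ (s U : Set X), IsOpen U → b ∈ U → b ∈ closure s → b ∈ closure (s ∩ U) := by
    intro s U hU hbU hbs
    rw [mem_closure_iff_nhds] at hbs ⊢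
    intro t ht
    rcases hbs (t ∩ U) (Filter.inter_mem ht (hU.mem_nhds hbU)) with ⟨z, ⟨⟨hzt, hzU⟩, hzs⟩⟩
    exact ⟨z, hzt, hzs, hzU⟩
  -- the set of fiber points inseparable from a point of A
  set A' : Set X := {c | f c = f b ∧ ∃ a ∈ A, Inseparable a c} with hA'def
  by_cases hcase : b ∈ closure A'
  · -- use Fréchet–Urysohn property of the fiber
    have hmem : (⟨b, rfl⟩ : f ⁻¹' {f b}) ∈
        closure {z : f ⁻¹' {f b} | ∃ a ∈ A, Inseparable a (z : X)} := by
      rw [closure_subtype]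
      have himg : (↑) '' {z : f ⁻¹' {f b} | ∃ a ∈ A, Inseparable a (z : X)} = A' := by
        ext c
        constructor
        · rintro ⟨⟨c', hc'⟩, hz, rfl⟩
          exact ⟨hc', hz⟩
        · rintro ⟨hfc, ha⟩
          exact ⟨⟨c, hfc⟩, ha, rfl⟩
      rw [himg]
      exact hcase
    obtain ⟨u, hu1, hu2⟩ := hFU _ hmem
    have hu2' : Filter.Tendsto (fun n => (u n : X)) Filter.atTop (nhds b) :=
      (continuousAt_subtype_val.tendsto).comp hu2
    choose a ha hins using hu1
    refine ⟨a, ha, ?_⟩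
    rw [tendsto_nhds]
    intro U hUopen hbU
    filter_upwards [(tendsto_nhds.mp hu2') U hUopen hbU] with n hn
    exact ((hins n).mem_open_iff hUopen).mpr hn
  · -- main case
    have hWopen : IsOpen (closure A')ᶜ := isClosed_closure.isOpen_compl
    set W : Set X := (closure A')ᶜ with hWdef
    have hbW : b ∈ W := hcase
    have hWA' : ∀ c, c ∈ W → c ∉ A' := fun c hcW hcA' => hcW (subset_closure hcA')
    set B : ℕ → Set X := fun n => (A ∩ W) ∩ V' n with hBdef
    have hbB : ∀ n, b ∈ closure (B n) := fun n =>
      clo_inter _ _ (hV'open n) (hbV' n) (clo_inter _ _ hWopen hbW hA)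
    have hBanti : ∀ n, B (n+1) ⊆ B n := fun n =>
      Set.inter_subset_inter_right _ (hV'anti n (n+1) (by omega))
    obtain ⟨u, hu1, hu2⟩ := hY (fun n => f '' B n) (f b)
      (fun n => Set.image_mono (hBanti n))
      (fun n => mem_closure_image hc.continuousAt (hbB n))
    choose x hxB hfx using hu1
    refine ⟨x, fun n => (hxB n).1.1, ?_⟩
    rw [tendsto_nhds]
    intro U hUopen hbU
    by_contra h
    have h' : ∃ᶠ n in Filter.atTop, x n ∉ U := Filter.not_eventually.mp h
    have hne : (Filter.atTop ⊓ Filter.principal {n | x n ∉ U}).NeBot :=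
      Filter.frequently_iff_neBot.mp h'
    set S : Set X := x '' {n | x n ∉ U} with hSdef
    have hfbS : f b ∈ closure (f '' S) := by
      refine mem_closure_of_tendsto (hu2.mono_left
        (inf_le_left : Filter.atTop ⊓ Filter.principal {n | x n ∉ U} ≤ Filter.atTop)) ?_
      refine Filter.eventually_inf_principal.mpr (Filter.Eventually.of_forall fun n hn => ?_)
      rw [← hfx n]
      exact Set.mem_image_of_mem f (Set.mem_image_of_mem x hn)
    obtain ⟨c, hcS, hfc⟩ := hcl.closure_image_subset S hfbS
    by_cases hall : ∀ m, c ∈ closure (V' m)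
    · have hcb : c = b := key c hfc fun n => hV'O n (hall n)
      rw [hcb] at hcS
      have : closure S ⊆ Uᶜ :=
        closure_minimal (fun z ⟨n, hn, hz⟩ => hz ▸ hn) (isClosed_compl_iff.mpr hUopen)
      exact this hcS hbU
    · push_neg at hall
      obtain ⟨m, hm⟩ := hall
      have hSsub : S ⊆ (x '' ({n | x n ∉ U} ∩ Set.Iio m)) ∪ V' m := by
        rintro z ⟨n, hn, rfl⟩
        rcases lt_or_ge n m with hlt | hle
        · exact Or.inl ⟨n, ⟨hn, hlt⟩, rfl⟩
        · exact Or.inr (hV'anti m n hle (hxB n).2)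
      have hcmem : c ∈ closure (x '' ({n | x n ∉ U} ∩ Set.Iio m)) := by
        have := (closure_mono hSsub).trans (closure_union ..).le hcS
        exact this.resolve_right hm
      have hfin : ({n | x n ∉ U} ∩ Set.Iio m).Finite :=
        (Set.finite_Iio m).subset Set.inter_subset_right
      have himg : x '' ({n | x n ∉ U} ∩ Set.Iio m) =
          ⋃ j ∈ ({n | x n ∉ U} ∩ Set.Iio m), {x j} := by
        ext z
        simp [Set.mem_image, eq_comm]
      rw [himg, hfin.closure_biUnion] at hcmem
      obtain ⟨j, hj, hcj⟩ := Set.mem_iUnion₂.mp hcmem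
      have hspec : x j ⤳ c := specializes_iff_mem_closure.mpr hcj
      have hins : Inseparable (x j) c := hspec.antisymm hspec.symm
      have hcW : c ∈ W := (hins.mem_open_iff hWopen).mp (hxB j).1.2
      exact hWA' c hcW ⟨hfc, x j, (hxB j).1.1, hins⟩
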